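/- For a forest T_v of height n rooted at a hypernode v, let (v = x_0, x_1, …, x_n) be the random hypernode sequence produced by Algorithm 2 (the SEI selection process with importance function r), and assume all relevant subtree costs are positive. Then the expected value of α(v, x_1, …, x_n) equals 1, where α(x_0, …, x_n) = ∏_{i=1}^{n} [ r(S(x_{i−1})) / r(x_i) ] · [ Cost(T_{x_i}) / Cost(T_{S(x_{i−1})}) ]. (Paper's Lemma 2.) -/

import Mathlib

open Finset

/-- A finite rooted tree on a finite node type `V`.  The root is its own parent,
every non-root node has a parent whose depth is one smaller, and the root is the
unique node of depth `0`. -/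
structure FinRootedTree (V : Type) [Fintype V] [DecidableEq V] where
  root : V
  parent : V → V
  depth : V → ℕ
  depth_root : depth root = 0
  parent_root : parent root = root
  depth_parent : ∀ v, v ≠ root → depth (parent v) + 1 = depth v
  eq_root_of_depth_zero : ∀ v, depth v = 0 → v = root

namespace FinRootedTree

variable {V : Type} [Fintype V] [DecidableEq V]

/-- The set of children of a node. -/
def children (T : FinRootedTree V) (x : V) : Finset V :=
  Finset.univ.filter fun w => w ≠ T.root ∧ T.parent w = x

/-- `S(v)`: the set of all children of nodes of a hypernode `v`. -/
def succs (T : FinRootedTree V) (v : Finset V) : Finset V :=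
  v.biUnion T.children

/-- The set of nodes of the subtree rooted at `x` (the descendants of `x`,
including `x` itself). -/
def desc (T : FinRootedTree V) (x : V) : Finset V :=
  Finset.univ.filter fun w =>
    x ∈ (Finset.range (T.depth w + 1)).image fun k => T.parent^[k] w

/-- `Cost(T_x)`: the total cost of the subtree rooted at `x`. -/
noncomputable def subtreeCost (T : FinRootedTree V) (c : V → ℝ) (x : V) : ℝ :=
  ∑ w ∈ T.desc x, c w

/-- `Cost(T_v)`: the total cost of the forest rooted at the hypernode `v`. -/
noncomputable def forestCost (T : FinRootedTree V) (c : V → ℝ) (v : Finset V) : ℝ :=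
  ∑ x ∈ v, T.subtreeCost c x

/-- `H(v)`: the hyperchildren of `v` for budget `B`, i.e. the subsets of `S(v)`
of size `min B |S(v)|`. -/
def hyper (T : FinRootedTree V) (B : ℕ) (v : Finset V) : Finset (Finset V) :=
  (T.succs v).powersetCard (min B (T.succs v).card)

/-- A hypernode: a nonempty set of distinct nodes, all at the same depth. -/
def IsHypernode (T : FinRootedTree V) (v : Finset V) : Prop :=
  v.Nonempty ∧ ∀ a ∈ v, ∀ b ∈ v, T.depth a = T.depth b

/-- The set of all complete hypernode sequences `(x_1, …)` that can occur after
`x_0 = v` in the SEI selection process (each `x_{i+1} ∈ H(x_i)`, stopping at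
the terminal position `S(x_k) = ∅`), given enough fuel. -/
def seqs (T : FinRootedTree V) (B : ℕ) : ℕ → Finset V → Finset (List (Finset V))
  | 0, _ => {[]}
  | fuel + 1, v =>
      if T.succs v = ∅ then {[]}
      else (T.hyper B v).biUnion fun w => (seqs T B fuel w).image fun l => w :: l

/-- The probability that the SEI selection process started at `v` produces the
hypernode sequence `l`. -/
noncomputable def seqProb (T : FinRootedTree V) (r : V → ℝ) :
    Finset V → List (Finset V) → ℝ
  | _, [] => 1
  | v, w :: l =>
      ((∑ a ∈ w, r a) /
          ((∑ a ∈ T.succs v, r a) *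
            ((((T.succs v).card - 1).choose (w.card - 1) : ℕ) : ℝ))) *
        seqProb T r w l

/-- `α(x_0, x_1, …, x_n) = ∏_{i=1}^n (r(S(x_{i-1}))/r(x_i)) * (Cost(T_{x_i})/Cost(T_{S(x_{i-1})}))`,
for the sequence starting at `v` and continuing along the list `l`. -/
noncomputable def alphaSeq (T : FinRootedTree V) (c r : V → ℝ) :
    Finset V → List (Finset V) → ℝ
  | _, [] => 1
  | v, w :: l =>
      ((∑ a ∈ T.succs v, r a) / (∑ a ∈ w, r a)) *
        (T.forestCost c w / T.forestCost c (T.succs v)) * alphaSeq T c r w l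

lemma card_filter_mem_powersetCard {α : Type*} [DecidableEq α] (S : Finset α) (k : ℕ)
    (hk : 1 ≤ k) (x : α) (hx : x ∈ S) :
    ((S.powersetCard k).filter (fun w => x ∈ w)).card = (S.card - 1).choose (k - 1) := by
  have : ((S.powersetCard k).filter (fun w => x ∈ w)).card
      = ((S.erase x).powersetCard (k - 1)).card := by
    refine Finset.card_bij' (fun w _ => w.erase x) (fun u _ => insert x u)
      ?_ ?_ ?_ ?_
    · intro w hw
      simp only [Finset.mem_filter, Finset.mem_powersetCard] at hw
      simp only [Finset.mem_powersetCard]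
      exact ⟨Finset.erase_subset_erase x hw.1.1,
        by rw [Finset.card_erase_of_mem hw.2, hw.1.2]⟩
    · intro u hu
      simp only [Finset.mem_powersetCard] at hu
      have hxu : x ∉ u := fun h => Finset.notMem_erase x S (hu.1 h)
      simp only [Finset.mem_filter, Finset.mem_powersetCard]
      refine ⟨⟨Finset.insert_subset hx (hu.1.trans (Finset.erase_subset x S)), ?_⟩,
        Finset.mem_insert_self x u⟩
      rw [Finset.card_insert_of_notMem hxu, hu.2]
      omega
    · intro w hw
      simp only [Finset.mem_filter] at hw
      exact Finset.insert_erase hw.2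
    · intro u hu
      simp only [Finset.mem_powersetCard] at hu
      exact Finset.erase_insert fun h => Finset.notMem_erase x S (hu.1 h)
  rw [this, Finset.card_powersetCard, Finset.card_erase_of_mem hx]

lemma sum_powersetCard_sum {α : Type*} [DecidableEq α] (S : Finset α) (k : ℕ)
    (hk : 1 ≤ k) (g : α → ℝ) :
    ∑ w ∈ S.powersetCard k, ∑ x ∈ w, g x
      = (((S.card - 1).choose (k - 1) : ℕ) : ℝ) * ∑ x ∈ S, g x := by
  have h1 : ∀ w ∈ S.powersetCard k, ∑ x ∈ w, g x = ∑ x ∈ S, if x ∈ w then g x else 0 := by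
    intro w hw
    rw [← Finset.sum_filter]
    congr 1
    have : S.filter (fun x => x ∈ w) = S ∩ w := Finset.filter_mem_eq_inter
    rw [this, Finset.inter_eq_right.2 (Finset.mem_powersetCard.1 hw).1]
  rw [Finset.sum_congr rfl h1, Finset.sum_comm, Finset.mul_sum]
  refine Finset.sum_congr rfl fun x hx => ?_
  rw [← Finset.sum_filter, Finset.sum_const,
    card_filter_mem_powersetCard S k hk x hx, nsmul_eq_mul]

lemma key_expectation (T : FinRootedTree V) (c : V → ℝ)
    (hpos : ∀ x : V, 0 < T.subtreeCost c x)
    (B : ℕ) (hB : 1 ≤ B) (r : V → ℝ) (hr : ∀ x : V, 0 < r x) (fuel : ℕ) :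
    ∀ v : Finset V,
      (∑ l ∈ seqs T B fuel v, seqProb T r v l * alphaSeq T c r v l) = 1 := by
  induction fuel with
  | zero => intro v; simp [seqs, seqProb, alphaSeq]
  | succ fuel ih =>
    intro v
    by_cases hS : T.succs v = ∅
    · simp [seqs, hS, seqProb, alphaSeq]
    · have hSne : (T.succs v).Nonempty := Finset.nonempty_iff_ne_empty.2 hS
      set S := T.succs v with hSdef
      set k := min B S.card with hkdef
      have hk1 : 1 ≤ k := le_min hB (Finset.card_pos.2 hSne)
      have hkS : k ≤ S.card := min_le_right _ _
      have hrS : 0 < ∑ a ∈ S, r a := Finset.sum_pos (fun a _ => hr a) hSne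
      have hCS : 0 < T.forestCost c S := Finset.sum_pos (fun a _ => hpos a) hSne
      have hchoose : (0 : ℝ) < (((S.card - 1).choose (k - 1) : ℕ) : ℝ) := by
        exact_mod_cast Nat.choose_pos (by omega)
      have hdisj : (↑(T.hyper B v) : Set (Finset V)).PairwiseDisjoint
          (fun w => (seqs T B fuel w).image fun l => w :: l) := by
        intro w1 _ w2 _ hne
        simp only [Finset.disjoint_left, Finset.mem_image]
        rintro l ⟨l1, _, rfl⟩ ⟨l2, _, h⟩
        exact hne (List.cons.injEq .. ▸ h).1.symm
      rw [show seqs T B (fuel + 1) v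
          = (T.hyper B v).biUnion (fun w => (seqs T B fuel w).image fun l => w :: l) by
        rw [seqs, if_neg hS],
        Finset.sum_biUnion hdisj]
      have hterm : ∀ w ∈ T.hyper B v,
          (∑ l ∈ (seqs T B fuel w).image (fun l => w :: l),
            seqProb T r v l * alphaSeq T c r v l)
          = T.forestCost c w
              / ((((S.card - 1).choose (k - 1) : ℕ) : ℝ) * T.forestCost c S) := by
        intro w hw
        rw [Finset.sum_image (fun a _ b _ h => (List.cons.injEq .. ▸ h).2)]
        obtain ⟨hwS, hwcard⟩ := Finset.mem_powersetCard.1 hw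
        have hwne : w.Nonempty := Finset.card_pos.1 (hwcard ▸ hk1)
        have hrw : 0 < ∑ a ∈ w, r a := Finset.sum_pos (fun a _ => hr a) hwne
        have heq : ∀ l, seqProb T r v (w :: l) * alphaSeq T c r v (w :: l)
            = (T.forestCost c w
                / ((((S.card - 1).choose (k - 1) : ℕ) : ℝ) * T.forestCost c S))
              * (seqProb T r w l * alphaSeq T c r w l) := by
          intro l
          show ((∑ a ∈ w, r a) / ((∑ a ∈ S, r a)
              * (((S.card - 1).choose (w.card - 1) : ℕ) : ℝ))) * seqProb T r w l
            * (((∑ a ∈ S, r a) / (∑ a ∈ w, r a))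
              * (T.forestCost c w / T.forestCost c S) * alphaSeq T c r w l) = _
          rw [show w.card = k from hwcard]
          field_simp
        rw [Finset.sum_congr rfl fun l _ => heq l, ← Finset.mul_sum, ih w, mul_one]
      rw [Finset.sum_congr rfl hterm]
      have hsum : ∑ w ∈ T.hyper B v, T.forestCost c w
          = (((S.card - 1).choose (k - 1) : ℕ) : ℝ) * T.forestCost c S :=
        sum_powersetCard_sum S k hk1 (T.subtreeCost c)
      rw [← Finset.sum_div, hsum]
      field_simp

/-- Paper's Lemma 2: the expected value of `α(v, x_1, …, x_n)` over the random
hypernode sequence produced by the SEI selection process equals `1`. -/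
theorem alpha_expectation (T : FinRootedTree V) (c : V → ℝ) (hc : ∀ x, 0 ≤ c x)
    (hpos : ∀ x : V, 0 < T.subtreeCost c x)
    (B : ℕ) (hB : 1 ≤ B) (r : V → ℝ) (hr : ∀ x : V, 0 < r x)
    (v : Finset V) (hv : T.IsHypernode v) :
    (∑ l ∈ seqs T B (Fintype.card V) v,
      seqProb T r v l * alphaSeq T c r v l) = 1 := by
  exact key_expectation T c hpos B hB r hr (Fintype.card V) v

end FinRootedTree
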